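/- Let P be a finite ranked poset with rank function r taking maximum value R, let P_i = {p ∈ P : r(p) = i}, let t_i be the composition of the toggles at all elements of P_i, and set t_even = ∏_{i even} t_i and t_odd = ∏_{i odd} t_i (both well defined, since t_i and t_j commute whenever |i − j| > 1). Then the composite t_even ∘ t_odd is conjugate to the Fon-Der-Flaass action Ψ in the toggle group G(P). -/

import Mathlib

open Classical

namespace FDF

variable {α : Type*} [PartialOrder α] [DecidableEq α]

/-- `I` is an order ideal (down-set) of the poset `α`. -/
def IsIdeal (I : Finset α) : Prop := ∀ ⦃x y : α⦄, y ∈ I → x ≤ y → x ∈ I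

/-- The toggle `t_p`. -/
noncomputable def toggle (p : α) (I : Finset α) : Finset α :=
  if p ∈ I ∧ ∀ y ∈ I, ¬ p < y then I.erase p
  else if p ∉ I ∧ IsIdeal (insert p I) then insert p I
  else I

variable [Fintype α]

/-- The Fon-Der-Flaass action on finsets: the down-closure of the set of minimal
elements of the complement of `I`. -/
noncomputable def fdf (I : Finset α) : Finset α :=
  Finset.univ.filter (fun x => ∃ y, y ∉ I ∧ (∀ z, z < y → z ∈ I) ∧ x ≤ y)

theorem isIdeal_fdf (I : Finset α) : IsIdeal (fdf I) := by
  intro x y hy hxy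
  simp only [fdf, Finset.mem_filter, Finset.mem_univ, true_and] at *
  obtain ⟨y', h1, h2, h3⟩ := hy
  exact ⟨y', h1, h2, le_trans hxy h3⟩

theorem mem_iff_fdf {I : Finset α} (hI : IsIdeal I) (x : α) :
    x ∈ I ↔ ∀ y, (y ∈ fdf I ∧ ∀ z ∈ fdf I, ¬ y < z) → ¬ y ≤ x := by
  constructor
  · rintro hx y ⟨hyf, hymax⟩ hyx
    -- y is a maximal element of fdf I; show y ∈ U(I), i.e. y ∉ I, contradiction with y ≤ x ∈ I
    simp only [fdf, Finset.mem_filter, Finset.mem_univ, true_and] at hyf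
    obtain ⟨y', h1, h2, h3⟩ := hyf
    have hy'f : y' ∈ fdf I := by
      simp only [fdf, Finset.mem_filter, Finset.mem_univ, true_and]
      exact ⟨y', h1, h2, le_refl _⟩
    have : y = y' := by
      rcases lt_or_eq_of_le h3 with h | h
      · exact absurd h (hymax y' hy'f)
      · exact h
    subst this
    exact h1 (hI hx hyx)
  · intro h
    by_contra hx
    -- find a minimal element of the complement below x
    have hne : (Finset.univ.filter (fun z => z ∉ I ∧ z ≤ x)).Nonempty :=
      ⟨x, by simp [hx]⟩
    obtain ⟨y, hy, hymin⟩ : ∃ m ∈ Finset.univ.filter (fun z => z ∉ I ∧ z ≤ x),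
        ∀ t ∈ Finset.univ.filter (fun z => z ∉ I ∧ z ≤ x), ¬ t < m := by
      obtain ⟨m, hm⟩ := Finset.exists_minimal hne
      exact ⟨m, hm.1, fun t ht hlt => not_le_of_gt hlt (hm.2 ht hlt.le)⟩
    simp only [Finset.mem_filter, Finset.mem_univ, true_and] at hy
    have hUy : y ∉ I ∧ ∀ z, z < y → z ∈ I := by
      refine ⟨hy.1, fun z hz => ?_⟩
      by_contra hzI
      exact hymin z (by simp [hzI, le_trans hz.le hy.2]) hz
    have hyf : y ∈ fdf I := by
      simp only [fdf, Finset.mem_filter, Finset.mem_univ, true_and]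
      exact ⟨y, hUy.1, hUy.2, le_refl _⟩
    refine h y ⟨hyf, ?_⟩ hy.2
    intro t htf hyt
    simp only [fdf, Finset.mem_filter, Finset.mem_univ, true_and] at htf
    obtain ⟨y'', h1, h2, h3⟩ := htf
    exact hUy.1 (h2 y (lt_of_lt_of_le hyt h3))

/-- The type of order ideals of `α`. -/
abbrev Ideals (α : Type*) [PartialOrder α] := {I : Finset α // IsIdeal I}

noncomputable instance : Fintype (Ideals α) := Fintype.ofFinite _

/-- The Fon-Der-Flaass action as a permutation of the set of order ideals. -/
noncomputable def fdfPerm (α : Type*) [PartialOrder α] [Fintype α] [DecidableEq α] :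
    Equiv.Perm (Ideals α) :=
  Equiv.ofBijective (fun I => ⟨fdf I.1, isIdeal_fdf I.1⟩)
    (Finite.injective_iff_bijective.mp (by
      rintro ⟨I, hI⟩ ⟨J, hJ⟩ h
      have h' : fdf I = fdf J := congrArg Subtype.val h
      refine Subtype.ext (Finset.ext fun x => ?_)
      rw [mem_iff_fdf hI, mem_iff_fdf hJ, h']))

theorem isIdeal_toggle (p : α) {I : Finset α} (hI : IsIdeal I) : IsIdeal (toggle p I) := by
  unfold toggle
  split_ifs with h1 h2
  · intro x y hy hxy
    rw [Finset.mem_erase] at hy ⊢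
    refine ⟨fun hxp => ?_, hI hy.2 hxy⟩
    subst hxp
    rcases lt_or_eq_of_le hxy with h | h
    · exact h1.2 y hy.2 h
    · exact hy.1 h.symm
  · exact h2.2
  · exact hI

theorem toggle_toggle (p : α) {I : Finset α} (hI : IsIdeal I) : toggle p (toggle p I) = I := by
  by_cases h1 : p ∈ I ∧ ∀ y ∈ I, ¬ p < y
  · have e1 : toggle p I = I.erase p := by unfold toggle; rw [if_pos h1]
    rw [e1]
    have h2 : ¬ (p ∈ I.erase p ∧ ∀ y ∈ I.erase p, ¬ p < y) := by
      simp [Finset.mem_erase]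
    have h3 : p ∉ I.erase p ∧ IsIdeal (insert p (I.erase p)) := by
      refine ⟨by simp, ?_⟩
      rw [Finset.insert_erase h1.1]
      exact hI
    unfold toggle
    rw [if_neg h2, if_pos h3, Finset.insert_erase h1.1]
  · by_cases h2 : p ∉ I ∧ IsIdeal (insert p I)
    · have e1 : toggle p I = insert p I := by unfold toggle; rw [if_neg h1, if_pos h2]
      rw [e1]
      have h3 : p ∈ insert p I ∧ ∀ y ∈ insert p I, ¬ p < y := by
        refine ⟨Finset.mem_insert_self _ _, fun y hy hpy => ?_⟩
        rcases Finset.mem_insert.mp hy with h | h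
        · subst h; exact lt_irrefl _ hpy
        · exact h2.1 (hI h hpy.le)
      unfold toggle
      rw [if_pos h3, Finset.erase_insert h2.1]
    · have e1 : toggle p I = I := by unfold toggle; rw [if_neg h1, if_neg h2]
      rw [e1]
      unfold toggle
      rw [if_neg h1, if_neg h2]

/-- The toggle `t_p` as a permutation of the set of order ideals. -/
noncomputable def togglePerm (p : α) : Equiv.Perm (Ideals α) where
  toFun I := ⟨toggle p I.1, isIdeal_toggle p I.2⟩
  invFun I := ⟨toggle p I.1, isIdeal_toggle p I.2⟩
  left_inv I := Subtype.ext (toggle_toggle p I.2)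
  right_inv I := Subtype.ext (toggle_toggle p I.2)

/-- The toggle group `G(P)`. -/
noncomputable def toggleGroup (α : Type*) [PartialOrder α] [Fintype α] [DecidableEq α] :
    Subgroup (Equiv.Perm (Ideals α)) :=
  Subgroup.closure (Set.range (togglePerm (α := α)))

end FDF


namespace FDFAux

variable {G : Type*} [Group G]

/-- product of a pairwise-commuting list of involutions is an involution -/
lemma prod_sq_one {l : List G} (hinv : ∀ x ∈ l, x * x = 1)
    (hp : l.Pairwise Commute) : l.prod * l.prod = 1 := by
  induction l with
  | nil => simp
  | cons a l ih =>
    rcases List.pairwise_cons.mp hp with ⟨hc, hp'⟩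
    have hca : Commute a l.prod := Commute.list_prod_right _ _ hc
    have h2 : l.prod * l.prod = 1 := ih (fun x hx => hinv x (by simp [hx])) hp'
    calc (a :: l).prod * (a :: l).prod
        = a * (l.prod * a) * l.prod := by simp [List.prod_cons, mul_assoc]
      _ = (a * a) * (l.prod * l.prod) := by rw [← hca.eq]; group
      _ = 1 := by rw [hinv a (by simp), h2, one_mul]

section Seq

variable (s : ℕ → G) (R : ℕ)

/-- s_k s_{k+1} ... s_R -/
noncomputable def Lin (k : ℕ) : G := ((List.range' k (R + 1 - k)).map s).prod

/-- s_k s_{k+2} s_{k+4} ... (up to R) -/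
noncomputable def Abip (k : ℕ) : G := ((List.range' k ((R + 2 - k) / 2) 2).map s).prod

/-- subgroup generated by s_j, j ≥ k -/
noncomputable def Hge (k : ℕ) : Subgroup G := Subgroup.closure {x | ∃ j, k ≤ j ∧ x = s j}

variable {s R}

lemma Lin_top {k : ℕ} (h : R < k) : Lin s R k = 1 := by
  have : R + 1 - k = 0 := by omega
  simp [Lin, this]

lemma Lin_eq {k : ℕ} (h : k ≤ R) : Lin s R k = s k * Lin s R (k + 1) := by
  have h1 : R + 1 - k = (R + 1 - (k+1)) + 1 := by omega
  rw [Lin, h1, List.range'_succ]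
  simp [Lin]

lemma Abip_top {k : ℕ} (h : R < k) : Abip s R k = 1 := by
  have : (R + 2 - k) / 2 = 0 := by omega
  simp [Abip, this]

lemma Abip_eq {k : ℕ} (h : k ≤ R) : Abip s R k = s k * Abip s R (k + 2) := by
  have h1 : (R + 2 - k) / 2 = (R + 2 - (k+2)) / 2 + 1 := by omega
  rw [Abip, h1, List.range'_succ]
  simp [Abip]

lemma s_mem_Hge {k j : ℕ} (h : k ≤ j) : s j ∈ Hge s k :=
  Subgroup.subset_closure ⟨j, h, rfl⟩

lemma Hge_mono {k k' : ℕ} (h : k ≤ k') : Hge s k' ≤ Hge s k :=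
  Subgroup.closure_mono (fun x ⟨j, hj, hx⟩ => ⟨j, le_trans h hj, hx⟩)

variable (hcomm : ∀ i j, i + 2 ≤ j → Commute (s i) (s j))

include hcomm in
lemma Hge_le_centralizer {j k : ℕ} (h : j + 2 ≤ k) :
    Hge s k ≤ Subgroup.centralizer {s j} := by
  rw [Hge, Subgroup.closure_le]
  rintro x ⟨i, hi, rfl⟩
  rw [SetLike.mem_coe, Subgroup.mem_centralizer_iff]
  rintro y rfl
  exact (hcomm j i (by omega)).eq

include hcomm in
lemma commute_Lin {i m : ℕ} (h : i + 2 ≤ m) : Commute (s i) (Lin s R m) := by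
  apply Commute.list_prod_right
  intro x hx
  simp only [List.mem_map] at hx
  obtain ⟨j, hj, rfl⟩ := hx
  have := List.mem_range'.mp hj
  obtain ⟨a, _, rfl⟩ := this
  exact hcomm i _ (by omega)

include hcomm in
lemma commute_Abip {i m : ℕ} (h : i + 2 ≤ m) : Commute (s i) (Abip s R m) := by
  apply Commute.list_prod_right
  intro x hx
  simp only [List.mem_map] at hx
  obtain ⟨j, hj, rfl⟩ := hx
  obtain ⟨a, _, rfl⟩ := List.mem_range'.mp hj
  exact hcomm i _ (by omega)

variable (hinv : ∀ i, s i * s i = 1)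

include hcomm hinv in
lemma sweep : ∀ n k, k + 1 + n = R →
    ∃ h ∈ Hge s (k + 1), h * (s (k+1) * s k * Lin s R (k + 2)) * h⁻¹ = Lin s R k := by
  intro n
  induction n with
  | zero =>
    intro k hk
    refine ⟨s (k+1), s_mem_Hge le_rfl, ?_⟩
    have hinv' : (s (k+1))⁻¹ = s (k+1) := inv_eq_of_mul_eq_one_right (hinv _)
    rw [hinv', Lin_top (show R < k + 2 by omega), Lin_eq (show k ≤ R by omega),
      Lin_eq (show k + 1 ≤ R by omega), Lin_top (show R < k + 2 by omega)]
    calc s (k+1) * (s (k+1) * s k * 1) * s (k+1)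
        = (s (k+1) * s (k+1)) * (s k * s (k+1)) := by group
      _ = s k * (s (k+1) * 1) := by rw [hinv]; group
  | succ n ih =>
    intro k hk
    obtain ⟨h', hmem', heq'⟩ := ih (k+1) (by omega)
    refine ⟨h' * s (k+1), mul_mem (Hge_mono (by omega) hmem') (s_mem_Hge le_rfl), ?_⟩
    have hinv' : (s (k+1))⁻¹ = s (k+1) := inv_eq_of_mul_eq_one_right (hinv _)
    have step1 : s (k+1) * (s (k+1) * s k * Lin s R (k + 2)) * (s (k+1))⁻¹
        = s k * (s (k+2) * s (k+1) * Lin s R (k+3)) := by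
      rw [hinv', Lin_eq (show k + 2 ≤ R by omega)]
      have hc : Commute (s (k+1)) (Lin s R (k+3)) := commute_Lin hcomm (by omega)
      calc s (k+1) * (s (k+1) * s k * (s (k+2) * Lin s R (k+3))) * s (k+1)
          = (s (k+1) * s (k+1)) * (s k * s (k+2) * (Lin s R (k+3) * s (k+1))) := by group
        _ = s k * (s (k+2) * s (k+1) * Lin s R (k+3)) := by
            rw [hinv, ← hc.eq]; group
    have hcent : Commute (s k) h' :=
      Subgroup.mem_centralizer_iff.mp (Hge_le_centralizer hcomm (by omega) hmem') _ rfl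
    rw [mul_inv_rev]
    calc h' * s (k+1) * (s (k+1) * s k * Lin s R (k + 2)) * ((s (k+1))⁻¹ * h'⁻¹)
        = h' * (s (k+1) * (s (k+1) * s k * Lin s R (k + 2)) * (s (k+1))⁻¹) * h'⁻¹ := by group
      _ = h' * (s k * (s (k+2) * s (k+1) * Lin s R (k+3))) * h'⁻¹ := by rw [step1]
      _ = s k * (h' * (s (k+2) * s (k+1) * Lin s R (k+3)) * h'⁻¹) := by
          rw [← mul_assoc, ← hcent.eq]; group
      _ = s k * Lin s R (k+1) := by rw [heq']
      _ = Lin s R k := (Lin_eq (by omega)).symm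

include hcomm hinv in
lemma zconj : ∀ n k, R + 1 ≤ k + n →
    ∃ g ∈ Hge s (k + 1), g * (Abip s R (k+1) * Abip s R k) * g⁻¹ = Lin s R k := by
  intro n
  induction n with
  | zero =>
    intro k hk
    exact ⟨1, one_mem _, by
      rw [Abip_top (by omega), Abip_top (by omega), Lin_top (by omega)]; group⟩
  | succ n ih =>
    intro k hk
    rcases lt_or_ge R k with h | h
    · exact ⟨1, one_mem _, by
        rw [Abip_top (by omega), Abip_top (by omega), Lin_top (by omega)]; group⟩
    rcases eq_or_lt_of_le h with rfl | hlt
    · refine ⟨1, one_mem _, ?_⟩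
      rw [Abip_top (by omega), Abip_eq le_rfl, Abip_top (by omega), Lin_eq le_rfl,
        Lin_top (by omega)]
      group
    · -- k < R
      obtain ⟨g', hg'mem, hg'⟩ := ih (k+2) (by omega)
      have hsplit : Abip s R (k+1) * Abip s R k
          = s (k+1) * s k * (Abip s R (k+3) * Abip s R (k+2)) := by
        rw [Abip_eq (show k + 1 ≤ R by omega), Abip_eq (show k ≤ R by omega)]
        have hc : Commute (s k) (Abip s R (k+3)) := commute_Abip hcomm (by omega)
        rw [mul_assoc, ← mul_assoc (Abip s R (k+3)), ← hc.eq]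
        group
      have hck : Commute (s k) g' :=
        Subgroup.mem_centralizer_iff.mp (Hge_le_centralizer hcomm (by omega) hg'mem) _ rfl
      have hck1 : Commute (s (k+1)) g' :=
        Subgroup.mem_centralizer_iff.mp (Hge_le_centralizer hcomm (by omega) hg'mem) _ rfl
      obtain ⟨h, hhmem, hh⟩ := sweep hcomm hinv (R - (k + 1)) k (show k + 1 + (R - (k+1)) = R by omega)
      refine ⟨h * g', mul_mem hhmem (Hge_mono (by omega) hg'mem), ?_⟩
      have key : g' * (Abip s R (k+1) * Abip s R k) * g'⁻¹
          = s (k+1) * s k * Lin s R (k+2) := by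
        rw [hsplit]
        calc g' * (s (k+1) * s k * (Abip s R (k+3) * Abip s R (k+2))) * g'⁻¹
            = s (k+1) * s k * (g' * (Abip s R (k+3) * Abip s R (k+2)) * g'⁻¹) := by
              rw [← mul_assoc g', ← mul_assoc g', ← hck1.eq, mul_assoc (s (k+1)),
                ← hck.eq]
              group
          _ = s (k+1) * s k * Lin s R (k+2) := by rw [hg']
      rw [mul_inv_rev]
      calc h * g' * (Abip s R (k+1) * Abip s R k) * (g'⁻¹ * h⁻¹)
          = h * (g' * (Abip s R (k+1) * Abip s R k) * g'⁻¹) * h⁻¹ := by group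
        _ = h * (s (k+1) * s k * Lin s R (k+2)) * h⁻¹ := by rw [key]
        _ = Lin s R k := hh

include hcomm hinv in
lemma main_conj :
    ∃ g ∈ Hge s 0, g * (Abip s R 0 * Abip s R 1) * g⁻¹ = Lin s R 0 := by
  obtain ⟨g', hg'mem, hg'⟩ := zconj (R := R) hcomm hinv (R + 1) 1 (by omega)
  have hc0 : Commute (s 0) g' :=
    Subgroup.mem_centralizer_iff.mp (Hge_le_centralizer hcomm (show 0 + 2 ≤ 1 + 1 by omega) hg'mem) _ rfl
  refine ⟨g', Hge_mono (by omega) hg'mem, ?_⟩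
  rw [Abip_eq (show 0 ≤ R by omega), show (0:ℕ) + 2 = 1 + 1 from rfl]
  calc g' * (s 0 * Abip s R (1+1) * Abip s R 1) * g'⁻¹
      = s 0 * (g' * (Abip s R (1+1) * Abip s R 1) * g'⁻¹) := by
        rw [mul_assoc (s 0), ← mul_assoc g', ← hc0.eq]; group
    _ = s 0 * Lin s R 1 := by rw [hg']
    _ = Lin s R 0 := (Lin_eq (by omega)).symm

end Seq

end FDFAux
namespace FDFAux

open FDF

section Poset

variable {α : Type*} [PartialOrder α] [DecidableEq α]

/-- The membership condition of `p` after toggling at `p` (for ideals). -/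
def Dcond (p : α) (S : Finset α) : Prop :=
  (p ∈ S ∧ ∃ y ∈ S, p < y) ∨ (p ∉ S ∧ ∀ z, z < p → z ∈ S)

lemma insert_isIdeal {S : Finset α} (hS : IsIdeal S) {p : α}
    (h : ∀ z, z < p → z ∈ S) : IsIdeal (insert p S) := by
  intro x y hy hxy
  rcases Finset.mem_insert.mp hy with rfl | hy'
  · rcases eq_or_lt_of_le hxy with rfl | hlt
    · exact Finset.mem_insert_self _ _
    · exact Finset.mem_insert_of_mem (h x hlt)
  · exact Finset.mem_insert_of_mem (hS hy' hxy)

lemma mem_toggle_ne {p q : α} (h : q ≠ p) (S : Finset α) :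
    q ∈ toggle p S ↔ q ∈ S := by
  unfold toggle
  split_ifs with h1 h2
  · simp [Finset.mem_erase, h]
  · simp [Finset.mem_insert, h]
  · exact Iff.rfl

lemma mem_toggle_self {S : Finset α} (hS : IsIdeal S) (p : α) :
    p ∈ toggle p S ↔ Dcond p S := by
  unfold toggle
  split_ifs with h1 h2
  · simp only [Finset.mem_erase, ne_eq, not_true_eq_false, false_and, false_iff]
    rintro (⟨_, y, hy, hlt⟩ | ⟨hp, _⟩)
    · exact h1.2 y hy hlt
    · exact hp h1.1
  · simp only [Finset.mem_insert_self, true_iff]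
    refine Or.inr ⟨h2.1, fun z hz => ?_⟩
    have := h2.2 (Finset.mem_insert_self p S) hz.le
    rcases Finset.mem_insert.mp this with rfl | h
    · exact absurd hz (lt_irrefl _)
    · exact h
  · push_neg at h1 h2
    constructor
    · intro hp
      exact Or.inl ⟨hp, h1 hp⟩
    · rintro (⟨hp, _⟩ | ⟨hp, hall⟩)
      · exact hp
      · exact absurd (insert_isIdeal hS hall) (h2 hp)

lemma Dcond_toggle {S : Finset α} (hS : IsIdeal S) {p q : α} (hpq : p ≠ q)
    (hc1 : ¬ p ⋖ q) (hc2 : ¬ q ⋖ p) :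
    Dcond p (toggle q S) ↔ Dcond p S := by
  have hmem : ∀ x : α, x ≠ q → (x ∈ toggle q S ↔ x ∈ S) := fun x hx => mem_toggle_ne hx S
  have part1 : (∃ y ∈ toggle q S, p < y) ↔ (∃ y ∈ S, p < y) := by
    by_cases hpq' : p < q
    · obtain ⟨w, hpw, hwq⟩ := (not_covBy_iff hpq').mp hc1
      constructor
      · rintro ⟨y, hy, hpy⟩
        by_cases hyq : y = q
        · subst hyq
          rcases (mem_toggle_self hS y).mp hy with ⟨hqs, _⟩ | ⟨_, hall⟩
          · exact ⟨w, hS hqs hwq.le, hpw⟩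
          · exact ⟨w, hall w hwq, hpw⟩
        · exact ⟨y, (hmem y hyq).mp hy, hpy⟩
      · rintro ⟨y, hy, hpy⟩
        by_cases hyq : y = q
        · subst hyq
          exact ⟨w, (hmem w (ne_of_lt hwq)).mpr (hS hy hwq.le), hpw⟩
        · exact ⟨y, (hmem y hyq).mpr hy, hpy⟩
    · constructor
      · rintro ⟨y, hy, hpy⟩
        exact ⟨y, (hmem y (fun h => hpq' (h ▸ hpy))).mp hy, hpy⟩
      · rintro ⟨y, hy, hpy⟩
        exact ⟨y, (hmem y (fun h => hpq' (h ▸ hpy))).mpr hy, hpy⟩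
  have part2 : (∀ z, z < p → z ∈ toggle q S) ↔ (∀ z, z < p → z ∈ S) := by
    by_cases hqp : q < p
    · obtain ⟨w, hqw, hwp⟩ := (not_covBy_iff hqp).mp hc2
      constructor
      · intro h z hz
        by_cases hzq : z = q
        · subst hzq
          exact hS ((hmem w (ne_of_gt hqw)).mp (h w hwp)) hqw.le
        · exact (hmem z hzq).mp (h z hz)
      · intro h z hz
        by_cases hzq : z = q
        · subst hzq
          exact (mem_toggle_self hS z).mpr (Or.inl ⟨h z hz, w, h w hwp, hqw⟩)
        · exact (hmem z hzq).mpr (h z hz)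
    · constructor
      · intro h z hz
        exact (hmem z (fun he => hqp (he ▸ hz))).mp (h z hz)
      · intro h z hz
        exact (hmem z (fun he => hqp (he ▸ hz))).mpr (h z hz)
  unfold Dcond
  rw [hmem p hpq, part1, part2]

variable [Fintype α]

lemma togglePerm_apply_val (p : α) (I : Ideals α) :
    ((togglePerm p I : Ideals α) : Finset α) = toggle p (I : Finset α) := rfl

lemma togglePerm_commute {p q : α} (hpq : p ≠ q) (hc1 : ¬ p ⋖ q) (hc2 : ¬ q ⋖ p) :
    Commute (togglePerm p) (togglePerm q) := by
  apply Equiv.ext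
  intro I
  apply Subtype.ext
  show toggle p (toggle q I.1) = toggle q (toggle p I.1)
  have hq : IsIdeal (toggle q I.1) := isIdeal_toggle q I.2
  have hp : IsIdeal (toggle p I.1) := isIdeal_toggle p I.2
  ext x
  by_cases hxp : x = p
  · subst hxp
    rw [mem_toggle_self hq, Dcond_toggle I.2 hpq hc1 hc2, ← mem_toggle_self I.2,
      mem_toggle_ne hpq]
  · by_cases hxq : x = q
    · subst hxq
      rw [mem_toggle_ne (Ne.symm hpq), mem_toggle_self I.2,
        ← Dcond_toggle I.2 (Ne.symm hpq) hc2 hc1, ← mem_toggle_self hp]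
    · rw [mem_toggle_ne hxp, mem_toggle_ne hxq, mem_toggle_ne hxq, mem_toggle_ne hxp]

lemma togglePerm_sq (p : α) : togglePerm p * togglePerm p = 1 := by
  apply Equiv.ext
  intro I
  apply Subtype.ext
  show toggle p (toggle p I.1) = I.1
  exact toggle_toggle p I.2

lemma prod_togglePerm_val (l : List α) (I : Ideals α) :
    (((l.map togglePerm).prod I : Ideals α) : Finset α) = l.foldr toggle (I : Finset α) := by
  induction l generalizing I with
  | nil => rfl
  | cons a l ih =>
    rw [List.map_cons, List.prod_cons, Equiv.Perm.mul_apply, List.foldr_cons, ← ih I]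
    rfl

lemma foldr_toggle_isIdeal (l : List α) {S : Finset α} (hS : IsIdeal S) :
    IsIdeal (l.foldr toggle S) := by
  induction l with
  | nil => exact hS
  | cons a l ih => exact isIdeal_toggle a ih

lemma foldr_toggle_mem {l : List α} (hnd : l.Nodup)
    (hinc : ∀ p ∈ l, ∀ q ∈ l, p ≠ q → ¬ p < q) {S : Finset α} (hS : IsIdeal S) : ∀ x : α,
    x ∈ l.foldr toggle S ↔ ((x ∈ l ∧ Dcond x S) ∨ (x ∉ l ∧ x ∈ S)) := by
  induction l with
  | nil => simp
  | cons a l ih =>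
    intro x
    have hnd' : l.Nodup := hnd.of_cons
    have hal : a ∉ l := (List.nodup_cons.mp hnd).1
    have hinc' : ∀ p ∈ l, ∀ q ∈ l, p ≠ q → ¬ p < q := fun p hp q hq =>
      hinc p (List.mem_cons_of_mem _ hp) q (List.mem_cons_of_mem _ hq)
    have ihm := ih hnd' hinc'
    have hT : IsIdeal (l.foldr toggle S) := foldr_toggle_isIdeal l hS
    rw [List.foldr_cons]
    by_cases hxa : x = a
    · subst hxa
      rw [mem_toggle_self hT]
      have hDa : Dcond x (l.foldr toggle S) ↔ Dcond x S := by
        have hxmem : x ∈ l.foldr toggle S ↔ x ∈ S := by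
          rw [ihm x]; simp [hal]
        have h1 : (∃ y ∈ l.foldr toggle S, x < y) ↔ (∃ y ∈ S, x < y) := by
          constructor <;> rintro ⟨y, hy, hxy⟩ <;> refine ⟨y, ?_, hxy⟩
          · have hyl : y ∉ l := fun hyl =>
              hinc x List.mem_cons_self y (List.mem_cons_of_mem _ hyl)
                (ne_of_lt hxy) hxy
            have := (ihm y).mp hy
            simpa [hyl] using this
          · rw [ihm y]
            have hyl : y ∉ l := fun hyl =>
              hinc x List.mem_cons_self y (List.mem_cons_of_mem _ hyl)
                (ne_of_lt hxy) hxy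
            exact Or.inr ⟨hyl, hy⟩
        have h2 : (∀ z, z < x → z ∈ l.foldr toggle S) ↔ (∀ z, z < x → z ∈ S) := by
          have hz : ∀ z, z < x → z ∉ l := fun z hz hzl =>
            hinc z (List.mem_cons_of_mem _ hzl) x List.mem_cons_self
              (ne_of_lt hz) hz
          constructor <;> intro h z hzx
          · have := (ihm z).mp (h z hzx)
            simpa [hz z hzx] using this
          · rw [ihm z]
            exact Or.inr ⟨hz z hzx, h z hzx⟩
        unfold Dcond
        rw [hxmem, h1, h2]
      rw [hDa]
      simp [hal]
    · rw [mem_toggle_ne hxa, ihm x]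
      simp [hxa]

end Poset

section Ranked

variable {P : Type*} [PartialOrder P] [Fintype P] [DecidableEq P]

lemma exists_le_covby {x y : P} (h : x < y) : ∃ z, x ≤ z ∧ z ⋖ y := by
  obtain ⟨z, hz, hmax⟩ : ∃ z ∈ Finset.univ.filter (fun z => x ≤ z ∧ z < y),
      ∀ t ∈ Finset.univ.filter (fun z => x ≤ z ∧ z < y), ¬ z < t := by
    obtain ⟨m, hm⟩ := Finset.exists_maximal
      (s := Finset.univ.filter fun z => x ≤ z ∧ z < y) ⟨x, by simp [h]⟩
    exact ⟨m, hm.1, fun t ht hlt => not_le_of_gt hlt (hm.2 ht hlt.le)⟩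
  simp only [Finset.mem_filter, Finset.mem_univ, true_and] at hz hmax
  exact ⟨z, hz.1, hz.2, fun c hzc hcy => hmax c ⟨le_trans hz.1 hzc.le, hcy⟩ hzc⟩

variable (r : P → ℤ)

lemma rank_lt (hrcov : ∀ x y : P, y ⋖ x → r x = r y + 1) :
    ∀ y x : P, x < y → r x < r y := by
  have wf : WellFounded ((· < ·) : P → P → Prop) := wellFounded_lt
  intro y
  induction y using WellFounded.induction wf with
  | _ y ih =>
    intro x hxy
    obtain ⟨z, hxz, hzy⟩ := exists_le_covby hxy
    have hr := hrcov y z hzy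
    rcases eq_or_lt_of_le hxz with rfl | hlt
    · omega
    · have := ih z hzy.lt x hlt
      omega

lemma rank_nonneg (hr0 : ∀ p : P, (∀ q : P, ¬ q < p) → r p = 0)
    (hrcov : ∀ x y : P, y ⋖ x → r x = r y + 1) : ∀ p : P, 0 ≤ r p := by
  have wf : WellFounded ((· < ·) : P → P → Prop) := wellFounded_lt
  intro p
  induction p using WellFounded.induction wf with
  | _ p ih =>
    by_cases hmin : ∀ q : P, ¬ q < p
    · rw [hr0 p hmin]
    · push_neg at hmin
      obtain ⟨q, hq⟩ := hmin
      obtain ⟨z, _, hzp⟩ := exists_le_covby hq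
      have := hrcov p z hzp
      have := ih z hzp.lt
      omega

/-- intermediate state of the rowmotion sweep -/
noncomputable def Jset (I0 : Finset P) (k : ℕ) : Finset P :=
  Finset.univ.filter (fun x => if (k : ℤ) ≤ r x then x ∈ FDF.fdf I0 else x ∈ I0)

lemma mem_Jset (I0 : Finset P) (k : ℕ) (x : P) :
    x ∈ Jset r I0 k ↔ (if (k : ℤ) ≤ r x then x ∈ FDF.fdf I0 else x ∈ I0) := by
  simp [Jset]

lemma mem_fdf (I0 : Finset P) (x : P) :
    x ∈ FDF.fdf I0 ↔ ∃ y, y ∉ I0 ∧ (∀ z, z < y → z ∈ I0) ∧ x ≤ y := by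
  simp [FDF.fdf]

lemma Dcond_Jset (hmono : ∀ y x : P, x < y → r x < r y) {I0 : Finset P} {x : P} {k : ℕ}
    (hk : r x = (k : ℤ)) :
    Dcond x (Jset r I0 (k + 1)) ↔ x ∈ FDF.fdf I0 := by
  constructor
  · rintro (⟨_, y, hyJ, hxy⟩ | ⟨hxJ, hall⟩)
    · have hry := hmono y x hxy
      rw [mem_Jset, if_pos (by push_cast; omega)] at hyJ
      exact FDF.isIdeal_fdf I0 hyJ hxy.le
    · have hxI : x ∉ I0 := fun h =>
        hxJ ((mem_Jset r I0 (k+1) x).mpr (by rw [if_neg (by push_cast; omega)]; exact h))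
      have hzI : ∀ z, z < x → z ∈ I0 := fun z hz => by
        have h' := hall z hz
        rw [mem_Jset, if_neg (by have := hmono x z hz; push_cast; omega)] at h'
        exact h'
      exact (mem_fdf I0 x).mpr ⟨x, hxI, hzI, le_refl x⟩
  · intro hxf
    obtain ⟨m, hmI, hmin, hxm⟩ := (mem_fdf I0 x).mp hxf
    rcases eq_or_lt_of_le hxm with rfl | hlt
    · refine Or.inr ⟨fun h => ?_, fun z hz => ?_⟩
      · rw [mem_Jset, if_neg (by push_cast; omega)] at h
        exact hmI h
      · rw [mem_Jset, if_neg (by have := hmono x z hz; push_cast; omega)]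
        exact hmin z hz
    · have hxI : x ∈ I0 := hmin x hlt
      refine Or.inl ⟨?_, m, ?_, hlt⟩
      · rw [mem_Jset, if_neg (by push_cast; omega)]
        exact hxI
      · rw [mem_Jset, if_pos (by have := hmono m x hlt; push_cast; omega)]
        exact (mem_fdf I0 m).mpr ⟨m, hmI, hmin, le_refl m⟩

lemma mem_Jset_succ (hmono : ∀ y x : P, x < y → r x < r y) {I0 : Finset P} {x : P} {k : ℕ}
    (hk : r x ≠ (k : ℤ)) :
    x ∈ Jset r I0 (k + 1) ↔ x ∈ Jset r I0 k := by
  rw [mem_Jset, mem_Jset]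
  rcases le_or_gt ((k : ℤ)) (r x) with h | h
  · rw [if_pos (by push_cast; omega), if_pos h]
  · rw [if_neg (by push_cast; omega), if_neg (by omega)]

end Ranked

end FDFAux
namespace FDFAux

open FDF

section Main

variable {P : Type*} [PartialOrder P] [Fintype P] [DecidableEq P]

lemma phi_val (r : P → ℤ) (hrcov : ∀ x y : P, y ⋖ x → r x = r y + 1)
    (R : ℕ) (hRle : ∀ p : P, r p ≤ (R : ℤ))
    (L : ℕ → List P) (hLnd : ∀ i, (L i).Nodup)
    (hLmem : ∀ i p, p ∈ L i ↔ r p = (i : ℤ)) :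
    ∀ n k, k + n = R + 1 → ∀ I : Ideals P,
      ((((List.range' k n).map (fun i => ((L i).map togglePerm).prod)).prod I : Ideals P)
          : Finset P) = Jset r (I : Finset P) k := by
  have hmono := rank_lt r hrcov
  intro n
  induction n with
  | zero =>
    intro k hk I
    have h0 : (List.range' k 0) = [] := rfl
    rw [h0]
    simp only [List.map_nil, List.prod_nil]
    show (I : Finset P) = _
    ext x
    rw [mem_Jset, if_neg (by have := hRle x; omega)]
  | succ n ih =>
    intro k hk I
    rw [List.range'_succ, List.map_cons, List.prod_cons, Equiv.Perm.mul_apply,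
      prod_togglePerm_val]
    set Irest : Ideals P :=
      ((List.range' (k+1) n).map (fun i => ((L i).map togglePerm).prod)).prod I with hIr
    have hrest : (Irest : Finset P) = Jset r (I : Finset P) (k+1) := ih (k+1) (by omega) I
    have hinc : ∀ p ∈ L k, ∀ q ∈ L k, p ≠ q → ¬ p < q := by
      intro p hp q hq hpq hlt
      have h1 := (hLmem k p).mp hp
      have h2 := (hLmem k q).mp hq
      have := hmono q p hlt
      omega
    ext x
    rw [foldr_toggle_mem (hLnd k) hinc Irest.2 x, hrest]
    by_cases hxk : r x = (k : ℤ)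
    · have hxL : x ∈ L k := (hLmem k x).mpr hxk
      rw [Dcond_Jset r hmono hxk]
      constructor
      · rintro (⟨_, h⟩ | ⟨hc, _⟩)
        · rw [mem_Jset, if_pos (le_of_eq hxk.symm)]
          exact h
        · exact absurd hxL hc
      · intro h
        rw [mem_Jset, if_pos (le_of_eq hxk.symm)] at h
        exact Or.inl ⟨hxL, h⟩
    · have hxL : x ∉ L k := fun h => hxk ((hLmem k x).mp h)
      rw [mem_Jset_succ r hmono hxk]
      constructor
      · rintro (⟨hc, _⟩ | ⟨_, h⟩)
        · exact absurd hc hxL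
        · exact h
      · intro h
        exact Or.inr ⟨hxL, h⟩

lemma fdfPerm_eq (r : P → ℤ) (hr0 : ∀ p : P, (∀ q : P, ¬ q < p) → r p = 0)
    (hrcov : ∀ x y : P, y ⋖ x → r x = r y + 1)
    (R : ℕ) (hRle : ∀ p : P, r p ≤ (R : ℤ))
    (L : ℕ → List P) (hLnd : ∀ i, (L i).Nodup)
    (hLmem : ∀ i p, p ∈ L i ↔ r p = (i : ℤ)) :
    fdfPerm P =
      ((List.range' 0 (R+1)).map (fun i => ((L i).map togglePerm).prod)).prod := by
  have h := phi_val r hrcov R hRle L hLnd hLmem (R+1) 0 (by omega)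
  apply Equiv.ext
  intro I
  apply Subtype.ext
  rw [h I]
  show fdf (I : Finset P) = _
  ext x
  rw [mem_Jset, if_pos (by have := rank_nonneg r hr0 hrcov x; push_cast; omega)]

lemma filter_even_eq (R : ℕ) :
    (List.range (R+1)).filter (fun i => decide (i % 2 = 0)) = List.range' 0 ((R+2)/2) 2 := by
  refine (fun hp h1 h2 => List.Perm.eq_of_pairwise' (r := (· ≤ ·)) h1 h2 hp) ?_ ?_ ?_
  · refine (List.perm_ext_iff_of_nodup (List.nodup_range.filter _) ?_).mpr ?_
    · exact (List.pairwise_lt_range' (s := 0) 2 (by norm_num)).imp ne_of_lt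
    · intro x
      simp only [List.mem_filter, List.mem_range, decide_eq_true_eq, List.mem_range']
      constructor
      · rintro ⟨h1, h2⟩
        exact ⟨x/2, by omega, by omega⟩
      · rintro ⟨i, hi, rfl⟩
        omega
  · exact ((List.pairwise_lt_range (n := R+1)).filter _).imp le_of_lt
  · exact (List.pairwise_lt_range' (s := 0) 2 (by norm_num)).imp le_of_lt

lemma filter_odd_eq (R : ℕ) :
    (List.range (R+1)).filter (fun i => decide (i % 2 = 1)) = List.range' 1 ((R+1)/2) 2 := by
  refine (fun hp h1 h2 => List.Perm.eq_of_pairwise' (r := (· ≤ ·)) h1 h2 hp) ?_ ?_ ?_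
  · refine (List.perm_ext_iff_of_nodup (List.nodup_range.filter _) ?_).mpr ?_
    · exact (List.pairwise_lt_range' (s := 1) 2 (by norm_num)).imp ne_of_lt
    · intro x
      simp only [List.mem_filter, List.mem_range, decide_eq_true_eq, List.mem_range']
      constructor
      · rintro ⟨h1, h2⟩
        exact ⟨x/2, by omega, by omega⟩
      · rintro ⟨i, hi, rfl⟩
        omega
  · exact ((List.pairwise_lt_range (n := R+1)).filter _).imp le_of_lt
  · exact (List.pairwise_lt_range' (s := 1) 2 (by norm_num)).imp le_of_lt

end Main

end FDFAux
/-- For a finite ranked poset `P` with rank function `r` of maximum value `R`, with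
`t_i` the composition of the toggles at the rank-`i` elements,
`t_even = ∏_{i even} t_i` and `t_odd = ∏_{i odd} t_i`, the composite `t_even ∘ t_odd`
is conjugate to the Fon-Der-Flaass action `Ψ` in the toggle group `G(P)`. -/
theorem fdfPerm_isConj_teven_todd
    {P : Type*} [PartialOrder P] [Fintype P] [DecidableEq P]
    (r : P → ℤ)
    (hr0 : ∀ p : P, (∀ q : P, ¬ q < p) → r p = 0)
    (hrcov : ∀ x y : P, y ⋖ x → r x = r y + 1)
    (R : ℕ) (hRle : ∀ p : P, r p ≤ (R : ℤ)) (hRmax : ∃ p : P, r p = (R : ℤ))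
    (L : ℕ → List P) (hLnd : ∀ i : ℕ, (L i).Nodup)
    (hLmem : ∀ (i : ℕ) (p : P), p ∈ L i ↔ r p = (i : ℤ))
 :
    ∃ g ∈ FDF.toggleGroup P,
      g * ((((List.range (R + 1)).filter (fun i => decide (i % 2 = 0))).map
              (fun i => ((L i).map FDF.togglePerm).prod)).prod *
           (((List.range (R + 1)).filter (fun i => decide (i % 2 = 1))).map
              (fun i => ((L i).map FDF.togglePerm).prod)).prod) * g⁻¹
        = FDF.fdfPerm P := by
  set s : ℕ → Equiv.Perm (FDF.Ideals P) := fun i => ((L i).map FDF.togglePerm).prod with hs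
  have hmono := FDFAux.rank_lt r hrcov
  have hinv : ∀ i, s i * s i = 1 := by
    intro i
    apply FDFAux.prod_sq_one
    · intro x hx
      obtain ⟨p, _, rfl⟩ := List.mem_map.mp hx
      exact FDFAux.togglePerm_sq p
    · have h1 : (L i).Pairwise (fun p q => Commute (FDF.togglePerm p) (FDF.togglePerm q)) := by
        refine (hLnd i).imp_of_mem ?_
        intro p q hp hq hpq
        have hrp := (hLmem i p).mp hp
        have hrq := (hLmem i q).mp hq
        refine FDFAux.togglePerm_commute hpq ?_ ?_
        · intro hc
          have := hrcov q p hc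
          omega
        · intro hc
          have := hrcov p q hc
          omega
      exact h1.map _ (fun a b h => h)
  have hcomm : ∀ i j, i + 2 ≤ j → Commute (s i) (s j) := by
    intro i j hij
    apply Commute.list_prod_right
    intro x hx
    obtain ⟨q, hq, rfl⟩ := List.mem_map.mp hx
    apply Commute.list_prod_left
    intro y hy
    obtain ⟨p, hp, rfl⟩ := List.mem_map.mp hy
    have hrp := (hLmem i p).mp hp
    have hrq := (hLmem j q).mp hq
    refine FDFAux.togglePerm_commute ?_ ?_ ?_
    · intro he
      rw [he] at hrp
      omega
    · intro hc
      have := hrcov q p hc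
      omega
    · intro hc
      have := hrcov p q hc
      omega
  obtain ⟨g, hgmem, hgeq⟩ := FDFAux.main_conj (s := s) (R := R) hcomm hinv
  refine ⟨g, ?_, ?_⟩
  · have hle : FDFAux.Hge s 0 ≤ FDF.toggleGroup P := by
      rw [FDFAux.Hge, Subgroup.closure_le]
      rintro x ⟨j, _, rfl⟩
      apply Subgroup.list_prod_mem
      intro y hy
      obtain ⟨p, _, rfl⟩ := List.mem_map.mp hy
      exact Subgroup.subset_closure ⟨p, rfl⟩
    exact hle hgmem
  · rw [FDFAux.filter_even_eq R, FDFAux.filter_odd_eq R]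
    have e0 : FDFAux.Abip s R 0 = ((List.range' 0 ((R+2)/2) 2).map s).prod := rfl
    have e1 : FDFAux.Abip s R 1 = ((List.range' 1 ((R+1)/2) 2).map s).prod := rfl
    have efdf : FDF.fdfPerm P = FDFAux.Lin s R 0 := by
      rw [FDFAux.Lin]
      exact FDFAux.fdfPerm_eq r hr0 hrcov R hRle L hLnd hLmem
    rw [efdf, ← e0, ← e1]
    exact hgeq
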